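/- Let G be a finite simple graph with n vertices and e ≥ 1 edges, and let j ≥ 0 and l ≥ 1 be the unique integers satisfying Σ_{t=0}^{j−1}(n−t) < e ≤ Σ_{t=0}^{j}(n−t) and l = e − Σ_{t=0}^{j−1}(n−t). Then for every integer i ≥ 0, B_i(G) ≤ Σ_{s=1}^{j} Σ_{u=s}^{n} C(u−1, i) + Σ_{u=j+1}^{j+l} C(u−1, i). -/

import Mathlib

open Finset

/-- The `i`-th Betti number in the linear strand of the edge ideal of `G`:
`B_i(G) = Σ_{S ⊆ V, |S| = i+2} (#components of the complement of G[S] − 1)`. -/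
noncomputable def linStrand {V : Type*} [Fintype V] [DecidableEq V]
    (G : SimpleGraph V) (i : ℕ) : ℕ :=
  ∑ S ∈ (Finset.univ : Finset V).powersetCard (i + 2),
    (Nat.card ((G.induce (S : Set V))ᶜ.ConnectedComponent) - 1)

namespace LinStrand

/-- `Pb n s = Σ_{t<s} (n-t)`. -/
def Pb (n s : ℕ) : ℕ := ∑ t ∈ range s, (n - t)

/-- `Rfun e n v` counts the elements `< v` in the multiset consisting, for each
`s < n`, of the interval `{s, …, s + min(n-s, e - Pb n s) - 1}` (lex "budget" multiset). -/
def Rfun (e n v : ℕ) : ℕ := ∑ s ∈ range n, min (n - s) (min (e - Pb n s) (v - s))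

lemma Pb_zero (n : ℕ) : Pb n 0 = 0 := rfl

lemma Pb_succ (n s : ℕ) : Pb n (s + 1) = n + Pb (n - 1) s := by
  unfold Pb
  rw [Finset.sum_range_succ' (fun t => n - t)]
  simp only [Nat.sub_zero]
  rw [Nat.add_comm]
  congr 1
  apply Finset.sum_congr rfl
  intro t _
  omega

lemma Pb_succ_right (n s : ℕ) : Pb n (s + 1) = Pb n s + (n - s) := by
  unfold Pb; rw [Finset.sum_range_succ]

lemma Pb_mono (n : ℕ) {s t : ℕ} (h : s ≤ t) : Pb n s ≤ Pb n t := by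
  unfold Pb
  exact Finset.sum_le_sum_of_subset (Finset.range_subset_range.2 h)

lemma Rfun_zero_v (e n : ℕ) : Rfun e n 0 = 0 := by
  unfold Rfun
  apply Finset.sum_eq_zero
  intro s _
  omega

lemma Rfun_zero_e (n v : ℕ) : Rfun 0 n v = 0 := by
  unfold Rfun
  apply Finset.sum_eq_zero
  intro s _
  omega

lemma Rfun_succ (e n v : ℕ) :
    Rfun e (n + 1) v = min (n + 1) (min e v) + Rfun (e - (n + 1)) n (v - 1) := by
  unfold Rfun
  rw [Finset.sum_range_succ' (fun s => min (n + 1 - s) (min (e - Pb (n+1) s) (v - s)))]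
  have hsum : (∑ s ∈ range n, min (n + 1 - (s+1)) (min (e - Pb (n+1) (s+1)) (v - (s+1))))
      = ∑ s ∈ range n, min (n - s) (min (e - (n+1) - Pb n s) (v - 1 - s)) := by
    apply Finset.sum_congr rfl
    intro s _
    have h1 : Pb (n+1) (s+1) = (n+1) + Pb n s := by
      have := Pb_succ (n+1) s; simpa using this
    rw [h1]
    have hp := Pb n s
    omega
  rw [hsum]
  have h0 : min (n + 1 - 0) (min (e - Pb (n+1) 0) (v - 0)) = min (n+1) (min e v) := by
    rw [Pb_zero]; omega
  rw [h0, Nat.add_comm]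

lemma Rfun_mono_e {a b : ℕ} (n v : ℕ) (h : a ≤ b) : Rfun a n v ≤ Rfun b n v := by
  unfold Rfun
  apply Finset.sum_le_sum
  intro s _
  omega

/-- total capacity: `2 * Pb n n = n * (n+1)` -/
lemma Pb_self (n : ℕ) : 2 * Pb n n = n * (n + 1) := by
  induction n with
  | zero => rfl
  | succ n ih =>
    have h1 : Pb (n+1) (n+1) = (n+1) + Pb n n := by simpa using Pb_succ (n+1) n
    rw [h1]
    nlinarith [ih]

/-- filled version: for `v ≥ n`, `Rfun e n v = min e (Pb n n)`. -/
lemma Rfun_total (e n v : ℕ) (h : n ≤ v) : Rfun e n v = min e (Pb n n) := by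
  induction n generalizing e v with
  | zero => simp [Rfun, Pb]
  | succ n ih =>
    rw [Rfun_succ, ih (e - (n+1)) (v-1) (by omega)]
    have h1 : Pb (n+1) (n+1) = (n+1) + Pb n n := by simpa using Pb_succ (n+1) n
    rw [h1]
    omega


lemma Pb_formula {m d : ℕ} (h : d ≤ m) : 2 * Pb m d + d * d = d * (2 * m + 1) := by
  induction d with
  | zero => simp [Pb]
  | succ d ih =>
    obtain ⟨k, rfl⟩ : ∃ k, m = d + k := ⟨m - d, by omega⟩
    have h1 : Pb (d+k) (d+1) = Pb (d+k) d + k := by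
      rw [Pb_succ_right]; congr 1; omega
    rw [h1]
    have ih' := ih (by omega)
    zify at ih' ⊢
    linear_combination ih'


private lemma aux_low {mm s aa bb p ww : ℕ} (hba : bb ≤ aa) (hfull : p + (mm - s) ≤ bb) :
    (min (mm-s) (aa-p) - (ww-s)) - (min (mm-s) (bb-p) - (ww-s)) = 0 := by omega

private lemma aux_high {mm s aa bb p ww : ℕ} (hba : bb ≤ aa) (hempty : aa ≤ p) :
    (min (mm-s) (aa-p) - (ww-s)) - (min (mm-s) (bb-p) - (ww-s)) = 0 := by omega

private lemma aux_single {mm v D s aa bb p ww : ℕ} (hsD : s < D) (hDv : D < v) (hvm : v ≤ mm)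
    (hww : ww + 1 = v) :
    (min (mm-s) (aa-p) - (ww-s)) - (min (mm-s) (bb-p) - (ww-s)) ≤ mm + 1 - v := by omega

private lemma aux_pair {mm v D s aa bb p1 p2 ww : ℕ} (hp2 : p2 = p1 + (mm - s))
    (hp1b : p1 ≤ bb) (hbp2 : bb < p2) (hp2a : p2 < aa) (hab : aa = bb + (mm + 1 - D))
    (hsD : s + 1 < D) (hDv : D < v) (hvm : v ≤ mm) (hww : ww + 1 = v) :
    ((min (mm-s) (aa-p1) - (ww-s)) - (min (mm-s) (bb-p1) - (ww-s)))
      + ((min (mm-(s+1)) (aa-p2) - (ww-(s+1))) - (min (mm-(s+1)) (bb-p2) - (ww-(s+1))))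
      ≤ mm + 1 - v := by omega

private lemma aux_fin {m v D a b T S1 S2 : ℕ} (hab : a = b + (m+1-D)) (hT : T ≤ m+1-v)
    (hD : D < v) (hv : v ≤ m) (hS : S2 = S1 + ((a - b) - T)) :
    v + S1 ≤ D + S2 := by omega

lemma Rfun_ge_first {n : ℕ} (hn : 1 ≤ n) (e v : ℕ) : min n (min e v) ≤ Rfun e n v := by
  unfold Rfun
  have h0 : (0:ℕ) ∈ range n := by simp; omega
  have := Finset.single_le_sum (f := fun s => min (n - s) (min (e - Pb n s) (v - s)))
    (fun i _ => Nat.zero_le _) h0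
  simpa [Pb_zero] using this

set_option maxHeartbeats 1000000 in
lemma key (m e D v : ℕ) (h1 : D ≤ m) (h2 : 2*e ≤ (m+1)*D) (h3 : 2*e ≤ (m+1)*m) :
    min (m+1) (min e v) + Rfun (e-(m+1)) m (v-1) ≤ min D v + Rfun (e-D) m (v-1) := by
  rcases Nat.eq_zero_or_pos e with he0 | he1
  · subst he0
    simp [Rfun_zero_e]
  have hD1 : 1 ≤ D := by
    rcases Nat.eq_zero_or_pos D with h | h
    · subst h; simp at h2; omega
    · exact h
  by_cases hv : v ≤ D
  · -- K1
    have hmono := Rfun_mono_e (a := e-(m+1)) (b := e-D) m (v-1) (by omega)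
    omega
  push_neg at hv
  -- facts e ≤ Pb m m
  have hQ := Pb_self m
  have heQ : e ≤ Pb m m := by nlinarith
  by_cases hvn : m+1 ≤ v
  · -- K2
    rw [Rfun_total _ _ _ (by omega), Rfun_total _ _ _ (by omega)]
    omega
  push_neg at hvn
  by_cases he : e ≤ m+1
  · -- K3
    have h0 : e - (m+1) = 0 := by omega
    rw [h0, Rfun_zero_e]
    have hm1 : 1 ≤ m := by omega
    have hfirst := Rfun_ge_first hm1 (e - D) (v-1)
    omega
  push_neg at he
  have hvn' : v ≤ m := by omega
  -- K4 main case : m+2 ≤ e, D < v ≤ m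
  set a := e - D with ha
  set b := e - (m+1) with hb
  set w := v - 1 with hw
  have hab : a = b + (m+1-D) := by omega
  have hb1 : 1 ≤ b := by omega
  have ha1 : 1 ≤ a := by omega
  -- C1 : a ≤ Pb m D
  have hC1 : a ≤ Pb m D := by
    have hf := Pb_formula h1
    have hdd : D * D ≤ D * (m+2) := Nat.mul_le_mul_left D (by omega)
    have hgoal : 2*e ≤ 2 * Pb m D + 2*D := by nlinarith
    omega
  -- block indices
  set s1 := Nat.findGreatest (fun s => Pb m s ≤ b) m with hs1def
  set s2 := Nat.findGreatest (fun s => Pb m s < a) m with hs2def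
  have hP1b : Pb m s1 ≤ b :=
    Nat.findGreatest_spec (P := fun s => Pb m s ≤ b) (Nat.zero_le m) (by show Pb m 0 ≤ b; rw [Pb_zero]; omega)
  have hP2a : Pb m s2 < a :=
    Nat.findGreatest_spec (P := fun s => Pb m s < a) (Nat.zero_le m) (by show Pb m 0 < a; rw [Pb_zero]; omega)
  have hs1le : s1 ≤ m := Nat.findGreatest_le m
  have hs2le : s2 ≤ m := Nat.findGreatest_le m
  have hs1lt : s1 < m := by
    rcases Nat.lt_or_ge s1 m with h | h
    · exact h
    · exfalso
      have : s1 = m := by omega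
      rw [this] at hP1b
      omega
  have h1s : b < Pb m (s1+1) := by
    have := Nat.findGreatest_is_greatest (P := fun s => Pb m s ≤ b) (n := m)
      (k := s1+1) (by omega) (by omega)
    omega
  have hs2max : ∀ k, s2 < k → k ≤ m → a ≤ Pb m k := by
    intro k hk hkm
    have := Nat.findGreatest_is_greatest (P := fun s => Pb m s < a) (n := m) hk hkm
    omega
  have hs2D : s2 < D := by
    by_contra hcon
    push_neg at hcon
    have := Pb_mono m hcon
    omega
  have hs12 : s1 ≤ s2 :=
    Nat.le_findGreatest (P := fun s => Pb m s < a) hs1le (by omega)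
  have hnomid : s2 ≤ s1 + 1 := by
    by_contra hcon
    push_neg at hcon
    have hPb2 : Pb m (s1+2) = Pb m (s1+1) + (m - (s1+1)) := Pb_succ_right m (s1+1)
    have hmono2 : Pb m (s1+2) ≤ Pb m s2 := Pb_mono m (by omega)
    omega
  -- define the per-block quantities
  set x : ℕ → ℕ := fun s => min (m - s) (a - Pb m s) with hx
  set y : ℕ → ℕ := fun s => min (m - s) (b - Pb m s) with hy
  set Br : ℕ → ℕ := fun s => (x s - (w - s)) - (y s - (w - s)) with hBr
  have hxy : ∀ s, y s ≤ x s := by intro s; simp only [hx, hy]; omega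
  have hBrle : ∀ s, Br s ≤ x s - y s := by
    intro s; have := hxy s; simp only [hBr]; omega
  -- sums of x and y
  have hXa : ∑ s ∈ range m, x s = a := by
    have h1 : ∑ s ∈ range m, x s = Rfun a m m := by
      unfold Rfun
      apply Finset.sum_congr rfl
      intro s hs
      simp only [hx]
      have : Pb m s ≥ 0 := Nat.zero_le _
      omega
    rw [h1, Rfun_total _ _ _ (le_refl m)]
    omega
  have hYb : ∑ s ∈ range m, y s = b := by
    have h1 : ∑ s ∈ range m, y s = Rfun b m m := by
      unfold Rfun
      apply Finset.sum_congr rfl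
      intro s hs
      simp only [hy]
      omega
    rw [h1, Rfun_total _ _ _ (le_refl m)]
    omega
  -- rewrite the two Rfun's
  have hRa : Rfun a m w = ∑ s ∈ range m, min (x s) (w - s) := by
    unfold Rfun; apply Finset.sum_congr rfl; intro s _; simp only [hx]; omega
  have hRb : Rfun b m w = ∑ s ∈ range m, min (y s) (w - s) := by
    unfold Rfun; apply Finset.sum_congr rfl; intro s _; simp only [hy]; omega
  -- pointwise decomposition
  have hdecomp : ∑ s ∈ range m, min (x s) (w - s)
      = ∑ s ∈ range m, min (y s) (w - s) + ((a - b) - ∑ s ∈ range m, Br s) := by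
    have hsub1 : ∑ s ∈ range m, (x s - y s)
        = ∑ s ∈ range m, x s - ∑ s ∈ range m, y s :=
      Finset.sum_tsub_distrib _ (fun s _ => hxy s)
    have hsub2 : ∑ s ∈ range m, ((x s - y s) - Br s)
        = ∑ s ∈ range m, (x s - y s) - ∑ s ∈ range m, Br s :=
      Finset.sum_tsub_distrib _ (fun s _ => hBrle s)
    have hpt : ∀ s ∈ range m, min (x s) (w - s)
        = min (y s) (w - s) + ((x s - y s) - Br s) := by
      intro s _
      have := hxy s
      simp only [hBr]
      omega
    rw [Finset.sum_congr rfl hpt, Finset.sum_add_distrib, hsub2, hsub1, hXa, hYb]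
  -- bound on the sum of Br
  have hba : b ≤ a := by omega
  have hBrzero : ∀ s ∈ range m, s ∉ Finset.Icc s1 s2 → Br s = 0 := by
    intro s hs hnot
    rw [Finset.mem_Icc] at hnot
    push_neg at hnot
    rw [Finset.mem_range] at hs
    rcases Nat.lt_or_ge s s1 with hlt | hge
    · -- s < s1 : block full on both sides
      have hm1 : Pb m (s+1) ≤ Pb m s1 := Pb_mono m (by omega)
      have hm2 : Pb m (s+1) = Pb m s + (m - s) := Pb_succ_right m s
      exact aux_low hba (by omega)
    · have hgt : s2 < s := by
        rcases Nat.lt_or_ge s2 s with h | h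
        · exact h
        · exact absurd (hnot hge) (by omega)
      have h9 := hs2max s hgt (by omega)
      exact aux_high hba h9
  have hBrsum : ∑ s ∈ range m, Br s ≤ m + 1 - v := by
    have hsub : Finset.Icc s1 s2 ⊆ range m := by
      intro t ht
      rw [Finset.mem_Icc] at ht
      rw [Finset.mem_range]
      omega
    have heq : ∑ s ∈ range m, Br s = ∑ s ∈ Finset.Icc s1 s2, Br s :=
      (Finset.sum_subset hsub (fun t ht hnot => hBrzero t ht hnot)).symm
    rw [heq]
    rcases (by omega : s2 = s1 ∨ s2 = s1 + 1) with hcase | hcase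
    · rw [hcase]
      simp only [Finset.Icc_self, Finset.sum_singleton]
      exact aux_single (show s1 < D by omega) hv hvn' (by omega)
    · rw [hcase]
      have hIcc : Finset.Icc s1 (s1+1) = {s1, s1+1} := by
        ext t
        simp [Finset.mem_Icc]
        omega
      rw [hIcc, Finset.sum_pair (by omega)]
      have hp2 : Pb m (s1+1) = Pb m s1 + (m - s1) := Pb_succ_right m s1
      have hP2a' : Pb m (s1+1) < a := by rw [← hcase]; exact hP2a
      exact aux_pair hp2 hP1b h1s hP2a' hab (by omega) hv hvn' (by omega)
  -- finish
  have hminv : min (m+1) (min e v) = v := by omega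
  have hminD : min D v = D := by omega
  rw [hminv, hminD, hRa, hRb]
  exact aux_fin hab hBrsum hv hvn' hdecomp


lemma sum_bound {n : ℕ} (d : ℕ → ℕ) (hb : ∀ s, s < n → d s + s + 1 ≤ n) :
    2 * (∑ t ∈ range n, d t) ≤ n * (n - 1) := by
  have h1 : ∑ t ∈ range n, d t ≤ ∑ t ∈ range n, (n - 1 - t) := by
    apply Finset.sum_le_sum
    intro s hs
    rw [Finset.mem_range] at hs
    have := hb s hs
    omega
  have h2 : (∑ t ∈ range n, (n - 1 - t)) = Pb (n-1) (n-1) := by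
    rcases Nat.eq_zero_or_pos n with h | h
    · subst h; simp [Pb]
    · obtain ⟨m, rfl⟩ : ∃ m, n = m + 1 := ⟨n - 1, by omega⟩
      unfold Pb
      rw [Finset.sum_range_succ]
      simp
  have h3 := Pb_self (n-1)
  rcases Nat.eq_zero_or_pos n with h | h
  · subst h; simp
  · have : (n-1) * ((n-1) + 1) = n * (n-1) := by
      have hn : n - 1 + 1 = n := by omega
      rw [hn]; ring
    omega

lemma main_induction : ∀ n (d : ℕ → ℕ), (∀ s, s < n → d s + s + 1 ≤ n) →
    (∀ s, s < n → 2 * (∑ t ∈ Finset.Ico s n, d t) ≤ (n - s) * d s) →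
    ∀ v, Rfun (∑ t ∈ range n, d t) n v ≤ ∑ s ∈ range n, min (d s) (v - s) := by
  intro n
  induction n with
  | zero => intro d _ _ v; simp [Rfun]
  | succ n ih =>
    intro d hbound hgreedy v
    set e := ∑ t ∈ range (n+1), d t with he
    have hd0 : d 0 ≤ n := by have := hbound 0 (by omega); omega
    have hg0 : 2 * e ≤ (n+1) * d 0 := by
      have h := hgreedy 0 (by omega)
      rw [← Finset.range_eq_Ico] at h
      simpa using h
    have htot : 2 * e ≤ (n+1) * n := by
      have := sum_bound d hbound
      have hh : (n+1) * ((n+1) - 1) = (n+1) * n := by norm_num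
      omega
    have hkey := key n e (d 0) v hd0 hg0 htot
    -- tail sum
    have he' : e - d 0 = ∑ t ∈ range n, d (t+1) := by
      rw [he, Finset.sum_range_succ' d n]
      omega
    have hih := ih (fun t => d (t+1))
      (by intro s hs
          show d (s+1) + s + 1 ≤ n
          have := hbound (s+1) (by omega); omega)
      (by
        intro s hs
        show 2 * (∑ t ∈ Finset.Ico s n, d (t+1)) ≤ (n - s) * d (s+1)
        have h := hgreedy (s+1) (by omega)
        have hre : ∑ t ∈ Finset.Ico s n, d (t+1) = ∑ t ∈ Finset.Ico (s+1) (n+1), d t := by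
          rw [Finset.sum_Ico_eq_sum_range, Finset.sum_Ico_eq_sum_range]
          have hn : n - s = n + 1 - (s + 1) := by omega
          rw [← hn]
          apply Finset.sum_congr rfl
          intro i _
          congr 1
          omega
        rw [hre]
        have : n + 1 - (s+1) = n - s := by omega
        rw [this] at h
        exact h)
      (v - 1)
    rw [← he'] at hih
    -- peel the RHS
    rw [Finset.sum_range_succ' (fun s => min (d s) (v - s)) n]
    have hpeel : ∑ i ∈ range n, min (d (i+1)) (v - (i+1))
        = ∑ i ∈ range n, min (d (i+1)) (v - 1 - i) := by
      apply Finset.sum_congr rfl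
      intro i _
      congr 1
      omega
    rw [Rfun_succ, hpeel]
    have hbeta : (∑ s ∈ range n, min ((fun t => d (t+1)) s) (v - 1 - s))
        = ∑ i ∈ range n, min (d (i+1)) (v - 1 - i) := rfl
    have : min (d 0) (v - 0) = min (d 0) v := by norm_num
    omega


/-- increment of the binomial coefficient -/
def stp (i w : ℕ) : ℕ := if w = 0 then Nat.choose 0 i else w.choose i - (w-1).choose i

lemma stp_telescope (i : ℕ) : ∀ a, ∑ w ∈ range (a+1), stp i w = a.choose i := by
  intro a
  induction a with
  | zero => simp [stp]
  | succ a ih =>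
    rw [Finset.sum_range_succ, ih]
    have hmono : a.choose i ≤ (a+1).choose i := Nat.choose_le_choose i (by omega)
    simp only [stp]
    have : ¬(a + 1 = 0) := by omega
    rw [if_neg this]
    simp only [Nat.add_sub_cancel]
    omega

lemma choose_as_sum {i n a : ℕ} (h : a < n) :
    a.choose i = ∑ w ∈ range n, (if w ≤ a then stp i w else 0) := by
  rw [← Finset.sum_filter]
  have hf : (range n).filter (fun w => w ≤ a) = range (a+1) := by
    ext w
    simp only [Finset.mem_filter, Finset.mem_range]
    omega
  rw [hf, stp_telescope]

lemma count_sum (c s w X : ℕ) :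
    ∑ k ∈ range c, (if w ≤ s + k then X else 0) = (c - min c (w - s)) * X := by
  rw [← Finset.sum_filter]
  have hf : (range c).filter (fun k => w ≤ s + k) = Finset.Ico (min c (w - s)) c := by
    ext k
    simp only [Finset.mem_filter, Finset.mem_range, Finset.mem_Ico]
    omega
  rw [hf]
  rw [Finset.sum_const, Nat.card_Ico, smul_eq_mul]

lemma weight_identity (n i : ℕ) (f : ℕ → ℕ) (hf : ∀ s, s < n → s + f s ≤ n) :
    ∑ s ∈ range n, ∑ k ∈ range (f s), (s+k).choose i
      = ∑ w ∈ range n, ((∑ s ∈ range n, f s) - ∑ s ∈ range n, min (f s) (w - s)) * stp i w := by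
  have step1 : ∀ s ∈ range n, ∑ k ∈ range (f s), (s+k).choose i
      = ∑ w ∈ range n, ((f s - min (f s) (w - s)) * stp i w) := by
    intro s hs
    rw [Finset.mem_range] at hs
    have step11 : ∀ k ∈ range (f s), (s+k).choose i
        = ∑ w ∈ range n, (if w ≤ s + k then stp i w else 0) := by
      intro k hk
      rw [Finset.mem_range] at hk
      exact choose_as_sum (by have := hf s hs; omega)
    rw [Finset.sum_congr rfl step11, Finset.sum_comm]
    apply Finset.sum_congr rfl
    intro w _
    exact count_sum (f s) s w (stp i w)
  rw [Finset.sum_congr rfl step1, Finset.sum_comm]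
  apply Finset.sum_congr rfl
  intro w _
  rw [← Finset.sum_mul]
  congr 1
  exact Finset.sum_tsub_distrib _ (fun s _ => by omega)

lemma abel (n i : ℕ) (c c' : ℕ → ℕ) (hc : ∀ s, s < n → s + c s ≤ n)
    (hc' : ∀ s, s < n → s + c' s ≤ n)
    (hsum : ∑ s ∈ range n, c s = ∑ s ∈ range n, c' s)
    (hdom : ∀ v, ∑ s ∈ range n, min (c' s) (v - s) ≤ ∑ s ∈ range n, min (c s) (v - s)) :
    ∑ s ∈ range n, ∑ k ∈ range (c s), (s+k).choose i
      ≤ ∑ s ∈ range n, ∑ k ∈ range (c' s), (s+k).choose i := by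
  rw [weight_identity n i c hc, weight_identity n i c' hc']
  apply Finset.sum_le_sum
  intro w _
  apply Nat.mul_le_mul_right
  rw [← hsum]
  exact Nat.sub_le_sub_left (hdom w) _


variable {V : Type*} [Fintype V] [DecidableEq V] (G : SimpleGraph V) [DecidableRel G.Adj]

/-- number of neighbours of `y` inside `A` -/
def degIn (A : Finset V) (y : V) : ℕ := (A.filter (G.Adj y ·)).card

/-- the chain of "remaining vertex" sets for the greedy max-degree ordering -/
noncomputable def BB : ℕ → Finset V
  | 0 => Finset.univ
  | s+1 =>
    if h : (BB s).Nonempty then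
      (BB s).erase ((Finset.exists_max_image (BB s) (degIn G (BB s)) h).choose)
    else ∅

variable [Nonempty V]

/-- the vertex picked at step `s` -/
noncomputable def xv (s : ℕ) : V :=
  if h : (BB G s).Nonempty then
    (Finset.exists_max_image (BB G s) (degIn G (BB G s)) h).choose
  else Classical.arbitrary V

lemma BB_succ_subset (s : ℕ) : BB G (s+1) ⊆ BB G s := by
  rw [BB]
  split_ifs with h
  · exact Finset.erase_subset _ _
  · exact Finset.empty_subset _

lemma BB_subset {s t : ℕ} (h : s ≤ t) : BB G t ⊆ BB G s := by
  induction t with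
  | zero => simp_all
  | succ t ih =>
    rcases Nat.lt_or_ge s (t+1) with h' | h'
    · exact (BB_succ_subset G t).trans (ih (by omega))
    · have : s = t + 1 := by omega
      subst this
      exact subset_rfl

lemma BB_spec {s : ℕ} (h : (BB G s).Nonempty) :
    xv G s ∈ BB G s ∧ BB G (s+1) = (BB G s).erase (xv G s) ∧
      ∀ y ∈ BB G s, degIn G (BB G s) y ≤ degIn G (BB G s) (xv G s) := by
  have hspec := (Finset.exists_max_image (BB G s) (degIn G (BB G s)) h).choose_spec
  constructor
  · rw [xv, dif_pos h]; exact hspec.1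
  constructor
  · rw [BB, dif_pos h, xv, dif_pos h]
  · rw [xv, dif_pos h]; exact hspec.2

lemma BB_card (hs : ∀ s, s ≤ Fintype.card V → (BB G s).card = Fintype.card V - s) : True := trivial

lemma BB_card' : ∀ s, s ≤ Fintype.card V → (BB G s).card = Fintype.card V - s := by
  intro s
  induction s with
  | zero => intro _; simp [BB]
  | succ s ih =>
    intro hle
    have hcard := ih (by omega)
    have hne : (BB G s).Nonempty := by
      rw [← Finset.card_pos, hcard]; omega
    obtain ⟨hmem, heq, _⟩ := BB_spec G hne
    rw [heq, Finset.card_erase_of_mem hmem, hcard]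
    omega

/-- position of a vertex in the greedy order -/
noncomputable def rho (x : V) : ℕ := Nat.findGreatest (fun s => x ∈ BB G s) (Fintype.card V)

lemma rho_lt (x : V) : rho G x < Fintype.card V := by
  set n := Fintype.card V
  have h1 : rho G x ≤ n := Nat.findGreatest_le n
  rcases Nat.lt_or_ge (rho G x) n with h | h
  · exact h
  · exfalso
    have heq : rho G x = n := by omega
    have hspec : x ∈ BB G (rho G x) :=
      Nat.findGreatest_spec (P := fun s => x ∈ BB G s) (Nat.zero_le n) (by simp [BB])
    rw [heq] at hspec
    have := BB_card' G n (le_refl n)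
    have : BB G n = ∅ := Finset.card_eq_zero.1 (by omega)
    rw [this] at hspec
    simp at hspec

lemma mem_BB_iff {x : V} {s : ℕ} (hs : s ≤ Fintype.card V) : x ∈ BB G s ↔ s ≤ rho G x := by
  constructor
  · intro hx
    exact Nat.le_findGreatest hs hx
  · intro hle
    have hspec : x ∈ BB G (rho G x) :=
      Nat.findGreatest_spec (P := fun s => x ∈ BB G s) (Nat.zero_le _) (by simp [BB])
    exact BB_subset G hle hspec

lemma not_mem_BB_rho_succ (x : V) : x ∉ BB G (rho G x + 1) := by
  intro hx
  have h1 := rho_lt G x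
  have h2 : rho G x + 1 ≤ Nat.findGreatest (fun s => x ∈ BB G s) (Fintype.card V) :=
    Nat.le_findGreatest (by omega) hx
  have h3 : Nat.findGreatest (fun s => x ∈ BB G s) (Fintype.card V) = rho G x := rfl
  omega

lemma rho_xv {s : ℕ} (hs : s < Fintype.card V) : rho G (xv G s) = s := by
  have hne : (BB G s).Nonempty := by
    rw [← Finset.card_pos, BB_card' G s (by omega)]; omega
  obtain ⟨hmem, heq, _⟩ := BB_spec G hne
  have h1 : s ≤ rho G (xv G s) := (mem_BB_iff G (by omega)).1 hmem
  have h2 : xv G s ∉ BB G (s+1) := by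
    rw [heq]; exact Finset.notMem_erase _ _
  by_contra hne2
  have : s + 1 ≤ rho G (xv G s) := by omega
  exact h2 ((mem_BB_iff G (by have := rho_lt G (xv G s); omega)).2 this)

lemma xv_rho (x : V) : xv G (rho G x) = x := by
  have hs := rho_lt G x
  have hne : (BB G (rho G x)).Nonempty := by
    rw [← Finset.card_pos, BB_card' G _ (by omega)]; omega
  obtain ⟨hmem, heq, _⟩ := BB_spec G hne
  have hx : x ∈ BB G (rho G x) := (mem_BB_iff G (by omega)).2 (le_refl _)
  have hxn : x ∉ BB G (rho G x + 1) := not_mem_BB_rho_succ G x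
  rw [heq] at hxn
  by_contra hcon
  exact hxn (Finset.mem_erase.2 ⟨fun h => hcon h.symm, hx⟩)

lemma rho_injective : Function.Injective (rho G) := by
  intro x y h
  have := xv_rho G x
  rw [h, xv_rho G y] at this
  exact this.symm

/-- the up-degree sequence of the greedy order -/
noncomputable def dseq (s : ℕ) : ℕ :=
  if s < Fintype.card V then degIn G (BB G (s+1)) (xv G s) else 0

lemma dseq_bound (s : ℕ) (hs : s < Fintype.card V) : dseq G s + s + 1 ≤ Fintype.card V := by
  rw [dseq, if_pos hs]
  have h1 : degIn G (BB G (s+1)) (xv G s) ≤ (BB G (s+1)).card :=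
    Finset.card_le_card (Finset.filter_subset _ _)
  have h2 := BB_card' G (s+1) (by omega)
  omega

lemma degIn_erase_self (A : Finset V) (x : V) : degIn G (A.erase x) x = degIn G A x := by
  unfold degIn
  congr 1
  ext z
  simp only [Finset.mem_filter, Finset.mem_erase]
  constructor
  · rintro ⟨⟨_, hz⟩, ha⟩; exact ⟨hz, ha⟩
  · rintro ⟨hz, ha⟩
    refine ⟨⟨fun hh => ?_, hz⟩, ha⟩
    subst hh
    exact G.irrefl ha

lemma degIn_insert {A : Finset V} {x y : V} (hx : x ∉ A) (hy : y ∈ A) :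
    degIn G (insert x A) y = degIn G A y + (if G.Adj y x then 1 else 0) := by
  unfold degIn
  rw [Finset.filter_insert]
  split_ifs with h
  · rw [Finset.card_insert_of_notMem (fun hc => hx (Finset.mem_filter.1 hc).1)]
  · omega

lemma handshake : ∀ k s, s + k = Fintype.card V →
    ∑ y ∈ BB G s, degIn G (BB G s) y = 2 * ∑ t ∈ Finset.Ico s (Fintype.card V), dseq G t := by
  intro k
  induction k with
  | zero =>
    intro s hs
    have hBB : BB G s = ∅ := Finset.card_eq_zero.1 (by rw [BB_card' G s (by omega)]; omega)
    rw [hBB]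
    have : Finset.Ico s (Fintype.card V) = ∅ := by
      rw [Finset.Ico_eq_empty_iff]; omega
    rw [this]
    simp
  | succ k ih =>
    intro s hs
    set n := Fintype.card V
    have hslt : s < n := by omega
    have hne : (BB G s).Nonempty := by
      rw [← Finset.card_pos, BB_card' G s (by omega)]; omega
    obtain ⟨hmem, heq, hmax⟩ := BB_spec G hne
    set x := xv G s
    set B' := BB G (s+1) with hB'
    have hins : BB G s = insert x B' := by
      rw [heq, Finset.insert_erase hmem]
    have hxnot : x ∉ B' := by rw [heq]; exact Finset.notMem_erase _ _
    have hds : dseq G s = degIn G B' x := by rw [dseq, if_pos hslt]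
    -- split the sum
    rw [hins, Finset.sum_insert hxnot]
    have hdegx : degIn G (insert x B') x = dseq G s := by
      rw [← hins, hds, heq, ← degIn_erase_self G (BB G s) x]
    have hsum : ∑ y ∈ B', degIn G (insert x B') y
        = ∑ y ∈ B', degIn G B' y + ∑ y ∈ B', (if G.Adj y x then 1 else 0) := by
      rw [← Finset.sum_add_distrib]
      apply Finset.sum_congr rfl
      intro y hy
      exact degIn_insert G hxnot hy
    have hcnt : ∑ y ∈ B', (if G.Adj y x then 1 else 0) = dseq G s := by
      rw [hds]
      unfold degIn
      rw [← Finset.sum_filter]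
      rw [Finset.sum_const, smul_eq_mul, mul_one]
      congr 1
      apply Finset.filter_congr
      intro y _
      constructor
      · intro h; exact h.symm
      · intro h; exact h.symm
    have hih := ih (s+1) (by omega)
    have hsplit : ∑ t ∈ Finset.Ico s n, dseq G t
        = dseq G s + ∑ t ∈ Finset.Ico (s+1) n, dseq G t :=
      Finset.sum_eq_sum_Ico_succ_bot hslt _
    rw [← hB'] at hih
    rw [hdegx, hsum, hcnt, hih, hsplit]
    ring

lemma dseq_greedy (s : ℕ) (hs : s < Fintype.card V) :
    2 * (∑ t ∈ Finset.Ico s (Fintype.card V), dseq G t) ≤ (Fintype.card V - s) * dseq G s := by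
  have hne : (BB G s).Nonempty := by
    rw [← Finset.card_pos, BB_card' G s (by omega)]; omega
  obtain ⟨hmem, heq, hmax⟩ := BB_spec G hne
  have hds : dseq G s = degIn G (BB G s) (xv G s) := by
    rw [dseq, if_pos hs, heq, degIn_erase_self]
  have h3 := BB_card' G s (by omega)
  have h1 : ∑ y ∈ BB G s, degIn G (BB G s) y ≤ (Fintype.card V - s) * dseq G s := by
    rw [hds]
    have := Finset.sum_le_card_nsmul (BB G s) (degIn G (BB G s))
      (degIn G (BB G s) (xv G s)) (fun y hy => hmax y hy)
    rw [h3] at this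
    simpa using this
  have h2 := handshake G (Fintype.card V - s) s (by omega)
  omega

lemma dseq_total : ∑ t ∈ range (Fintype.card V), dseq G t = G.edgeFinset.card := by
  have h := handshake G (Fintype.card V) 0 (by omega)
  have hBB0 : BB G 0 = Finset.univ := rfl
  rw [hBB0] at h
  have hdeg : ∀ y ∈ (Finset.univ : Finset V), degIn G Finset.univ y = G.degree y := by
    intro y _
    unfold degIn
    rw [SimpleGraph.degree]
    congr 1
    ext z
    simp [SimpleGraph.mem_neighborFinset]
  rw [Finset.sum_congr rfl hdeg] at h
  rw [SimpleGraph.sum_degrees_eq_twice_card_edges] at h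
  rw [Finset.range_eq_Ico]
  omega


/-- Pascal summation -/
lemma pascal (i : ℕ) : ∀ d a : ℕ, (a + d).choose (i+1) = a.choose (i+1) + ∑ k ∈ range d, (a+k).choose i := by
  intro d
  induction d with
  | zero => simp
  | succ d ih =>
    intro a
    have h1 : a + (d+1) = (a+d) + 1 := by omega
    rw [h1, Nat.choose_succ_succ' (a+d) i, Finset.sum_range_succ, ih a]
    omega

section Comps

variable (i : ℕ)

/-- the component type of the complement of the induced subgraph -/
abbrev comps (S : Finset V) := ((G.induce (S : Set V))ᶜ).ConnectedComponent

noncomputable instance comps_fintype (S : Finset V) : Fintype (comps G S) := by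
  classical
  exact Fintype.ofFinite _

/-- a vertex of `S` of maximal `rho` -/
noncomputable def maxV (S : Finset V) (h : S.Nonempty) : V :=
  (Finset.exists_max_image S (rho G) h).choose

lemma maxV_mem {S : Finset V} (h : S.Nonempty) : maxV G S h ∈ S :=
  (Finset.exists_max_image S (rho G) h).choose_spec.1

lemma maxV_max {S : Finset V} (h : S.Nonempty) : ∀ y ∈ S, rho G y ≤ rho G (maxV G S h) :=
  (Finset.exists_max_image S (rho G) h).choose_spec.2

/-- designated finset of non-distinguished components -/
noncomputable def desig (S : Finset V) : Finset (comps G S) := by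
  classical
  exact if h : S.Nonempty then
    Finset.univ.erase ((G.induce (S : Set V))ᶜ.connectedComponentMk
      ⟨maxV G S h, Finset.mem_coe.2 (maxV_mem G h)⟩)
  else ∅

/-- representative of a component: an element of maximal `rho` -/
noncomputable def repC (S : Finset V) (C : comps G S) : V := by
  classical
  exact (Finset.exists_max_image
    ((Finset.univ : Finset (S : Set V)).filter
      (fun z => (G.induce (S : Set V))ᶜ.connectedComponentMk z = C))
    (fun z => rho G z.val)
    (by
      obtain ⟨z, hz⟩ := C.exists_rep
      exact ⟨z, Finset.mem_filter.2 ⟨Finset.mem_univ _, hz⟩⟩)).choose.val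

lemma repC_mem (S : Finset V) (C : comps G S) : repC G S C ∈ S := by
  classical
  unfold repC
  generalize_proofs pf
  exact Finset.mem_coe.1 pf.choose.2

lemma repC_comp (S : Finset V) (C : comps G S) :
    (G.induce (S : Set V))ᶜ.connectedComponentMk ⟨repC G S C, Finset.mem_coe.2 (repC_mem G S C)⟩ = C := by
  classical
  unfold repC
  generalize_proofs pf h
  have h1 := (Finset.mem_filter.1 pf.choose_spec.1).2
  have h2 : (⟨pf.choose.val, h⟩ : (S : Set V)) = pf.choose := Subtype.ext rfl
  rw [h2]
  exact h1

lemma repC_max (S : Finset V) (C : comps G S) (z : (S : Set V))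
    (hz : (G.induce (S : Set V))ᶜ.connectedComponentMk z = C) :
    rho G z.val ≤ rho G (repC G S C) := by
  classical
  unfold repC
  generalize_proofs pf
  exact pf.choose_spec.2 z (Finset.mem_filter.2 ⟨Finset.mem_univ _, hz⟩)



/-- number of neighbours above `x` -/
noncomputable def ddeg (x : V) : ℕ :=
  (Finset.univ.filter (fun z => G.Adj x z ∧ rho G x < rho G z)).card

lemma card_Lo (x : V) :
    (Finset.univ.filter (fun y => rho G y < rho G x)).card = rho G x := by
  have hlt := rho_lt G x
  have heq : Finset.univ.filter (fun y => rho G y < rho G x)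
      = Finset.univ \ BB G (rho G x) := by
    ext y
    simp only [Finset.mem_filter, Finset.mem_univ, true_and, Finset.mem_sdiff]
    rw [mem_BB_iff G (by omega)]
    omega
  rw [heq, Finset.card_sdiff_of_subset (Finset.subset_univ _), BB_card' G (rho G x) (by omega),
    Finset.card_univ]
  omega

lemma ddeg_eq (x : V) : ddeg G x = dseq G (rho G x) := by
  have hlt := rho_lt G x
  rw [dseq, if_pos hlt, xv_rho G x]
  unfold ddeg degIn
  congr 1
  ext z
  simp only [Finset.mem_filter, Finset.mem_univ, true_and]
  rw [mem_BB_iff G (by omega)]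
  constructor
  · rintro ⟨h1, h2⟩; exact ⟨h2, h1⟩
  · rintro ⟨h1, h2⟩; exact ⟨h2, h1⟩

lemma count_bound (x : V) (i : ℕ) :
    (((Finset.univ.erase x).powersetCard (i+1)).filter
      (fun T => (∀ y ∈ T, rho G x < rho G y → G.Adj x y) ∧ ∃ y ∈ T, rho G x < rho G y)).card
    ≤ (rho G x + ddeg G x).choose (i+1) - (rho G x).choose (i+1) := by
  classical
  set Lo := Finset.univ.filter (fun y => rho G y < rho G x) with hLo
  set Nb := Finset.univ.filter (fun z => G.Adj x z ∧ rho G x < rho G z) with hNb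
  have hdisj : Disjoint Lo Nb := by
    rw [Finset.disjoint_left]
    intro y hy hy'
    rw [hLo, Finset.mem_filter] at hy
    rw [hNb, Finset.mem_filter] at hy'
    omega
  have hsub : (((Finset.univ.erase x).powersetCard (i+1)).filter
      (fun T => (∀ y ∈ T, rho G x < rho G y → G.Adj x y) ∧ ∃ y ∈ T, rho G x < rho G y))
      ⊆ ((Lo ∪ Nb).powersetCard (i+1)) \ (Lo.powersetCard (i+1)) := by
    intro T hT
    rw [Finset.mem_filter, Finset.mem_powersetCard] at hT
    obtain ⟨⟨hTs, hTc⟩, hall, y₀, hy₀, hy₀'⟩ := hT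
    rw [Finset.mem_sdiff, Finset.mem_powersetCard]
    constructor
    · constructor
      · intro y hy
        have hyx : y ≠ x := by
          intro h; subst h
          exact (Finset.mem_erase.1 (hTs hy)).1 rfl
        have hneq : rho G y ≠ rho G x := fun h => hyx (rho_injective G h)
        rcases Nat.lt_or_ge (rho G y) (rho G x) with h | h
        · exact Finset.mem_union_left _ (by rw [hLo, Finset.mem_filter]; exact ⟨Finset.mem_univ _, h⟩)
        · have hgt : rho G x < rho G y := by omega
          exact Finset.mem_union_right _
            (by rw [hNb, Finset.mem_filter]; exact ⟨Finset.mem_univ _, hall y hy hgt, hgt⟩)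
      · exact hTc
    · rw [Finset.mem_powersetCard]
      rintro ⟨hTs', _⟩
      have := hTs' hy₀
      rw [hLo, Finset.mem_filter] at this
      omega
  have hPle : Lo.powersetCard (i+1) ⊆ (Lo ∪ Nb).powersetCard (i+1) :=
    Finset.powersetCard_mono Finset.subset_union_left
  calc _ ≤ (((Lo ∪ Nb).powersetCard (i+1)) \ (Lo.powersetCard (i+1))).card :=
        Finset.card_le_card hsub
    _ = ((Lo ∪ Nb).powersetCard (i+1)).card - (Lo.powersetCard (i+1)).card :=
        Finset.card_sdiff_of_subset hPle
    _ = (rho G x + ddeg G x).choose (i+1) - (rho G x).choose (i+1) := by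
        rw [Finset.card_powersetCard, Finset.card_powersetCard,
          Finset.card_union_of_disjoint hdisj, card_Lo G x]
        rfl


set_option maxHeartbeats 1000000 in
lemma linStrand_le_vertexsum (i : ℕ) :
    linStrand G i ≤ ∑ x : V, ((rho G x + ddeg G x).choose (i+1) - (rho G x).choose (i+1)) := by
  classical
  -- Step 1: bound each summand by the number of non-distinguished components
  have hstep1 : linStrand G i ≤ ∑ S ∈ (Finset.univ : Finset V).powersetCard (i+2), (desig G S).card := by
    unfold linStrand
    apply Finset.sum_le_sum
    intro S hS
    rw [Finset.mem_powersetCard] at hS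
    have hne : S.Nonempty := by
      rw [← Finset.card_pos, hS.2]; omega
    unfold desig
    rw [dif_pos hne, Finset.card_erase_of_mem (Finset.mem_univ _), Finset.card_univ,
      Nat.card_eq_fintype_card]
  -- Step 2: the injection
  set A := ((Finset.univ : Finset V).powersetCard (i+2)).sigma (fun S => desig G S) with hA
  set Tgt := (Finset.univ : Finset V).sigma (fun x => ((Finset.univ.erase x).powersetCard (i+1)).filter
      (fun T => (∀ y ∈ T, rho G x < rho G y → G.Adj x y) ∧ ∃ y ∈ T, rho G x < rho G y)) with hTgt
  have hcardA : ∑ S ∈ (Finset.univ : Finset V).powersetCard (i+2), (desig G S).card = A.card := by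
    rw [hA, Finset.card_sigma]
  have hinj : A.card ≤ Tgt.card := by
    apply Finset.card_le_card_of_injOn
      (fun p => (⟨repC G p.1 p.2, p.1.erase (repC G p.1 p.2)⟩ : Σ _ : V, Finset V))
    · -- maps into target
      rintro ⟨S, C⟩ hp
      rw [hA, Finset.mem_coe, Finset.mem_sigma] at hp
      obtain ⟨hS, hC⟩ := hp
      rw [Finset.mem_powersetCard] at hS
      have hne : S.Nonempty := by rw [← Finset.card_pos, hS.2]; omega
      have hCne : C ≠ (G.induce (S : Set V))ᶜ.connectedComponentMk
          ⟨maxV G S hne, Finset.mem_coe.2 (maxV_mem G hne)⟩ := by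
        unfold desig at hC
        rw [dif_pos hne] at hC
        exact (Finset.mem_erase.1 hC).1
      set x := repC G S C with hx
      have hxS : x ∈ S := repC_mem G S C
      rw [hTgt, Finset.mem_coe, Finset.mem_sigma]
      refine ⟨Finset.mem_univ _, ?_⟩
      rw [Finset.mem_filter, Finset.mem_powersetCard]
      have hadjprop : ∀ y ∈ S.erase x, rho G x < rho G y → G.Adj x y := by
        intro y hy hlt
        have hyS : y ∈ S := (Finset.mem_erase.1 hy).2
        by_contra hnadj
        have hxyne : (⟨x, Finset.mem_coe.2 hxS⟩ : (S : Set V)) ≠ ⟨y, Finset.mem_coe.2 hyS⟩ := by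
          intro hcon
          have : x = y := congrArg Subtype.val hcon
          subst this
          omega
        have hadj' : ((G.induce (S : Set V))ᶜ).Adj ⟨x, Finset.mem_coe.2 hxS⟩ ⟨y, Finset.mem_coe.2 hyS⟩ := by
          rw [SimpleGraph.compl_adj]
          refine ⟨hxyne, ?_⟩
          rw [SimpleGraph.comap_adj]
          exact hnadj
        have hmkeq : (G.induce (S : Set V))ᶜ.connectedComponentMk ⟨y, Finset.mem_coe.2 hyS⟩ = C := by
          rw [← repC_comp G S C]
          exact (SimpleGraph.ConnectedComponent.connectedComponentMk_eq_of_adj hadj'.symm)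
        have h9 : rho G y ≤ rho G (repC G S C) :=
          repC_max G S C ⟨y, Finset.mem_coe.2 hyS⟩ hmkeq
        rw [← hx] at h9
        omega
      refine ⟨⟨?_, ?_⟩, hadjprop, ?_⟩
      · intro y hy
        rw [Finset.mem_erase]
        exact ⟨(Finset.mem_erase.1 hy).1, Finset.mem_univ _⟩
      · rw [Finset.card_erase_of_mem hxS, hS.2]
        omega
      · -- the maximal vertex witnesses the existential
        set M := maxV G S hne with hM
        have hMS : M ∈ S := maxV_mem G hne
        have hxM : x ≠ M := by
          intro hcon
          apply hCne
          rw [← repC_comp G S C]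
          congr 1
          exact Subtype.ext hcon
        have hlt : rho G x < rho G M := by
          have h1 := maxV_max G hne x hxS
          rw [← hM] at h1
          have h2 : rho G x ≠ rho G M := fun h => hxM (rho_injective G h)
          omega
        exact ⟨M, Finset.mem_erase.2 ⟨fun h => hxM h.symm, hMS⟩, hlt⟩
    · -- injectivity
      rintro ⟨S, C⟩ hp ⟨S', C'⟩ hq heq
      simp only [Sigma.mk.inj_iff] at heq
      obtain ⟨hx, hT⟩ := heq
      have hT' : S.erase (repC G S C) = S'.erase (repC G S' C') := eq_of_heq hT
      have hp' := Finset.mem_coe.1 hp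
      have hq' := Finset.mem_coe.1 hq
      rw [hA, Finset.mem_sigma] at hp' hq'
      have hpS := hp'.1
      have hqS := hq'.1
      rw [Finset.mem_powersetCard] at hpS hqS
      have hxS : repC G S C ∈ S := repC_mem G S C
      have hxS' : repC G S' C' ∈ S' := repC_mem G S' C'
      have hSS : S = S' := by
        rw [← Finset.insert_erase hxS, ← Finset.insert_erase hxS', hT', hx]
      subst hSS
      have hrep : repC G S C = repC G S C' := hx
      have hCC : C = C' := by
        rw [← repC_comp G S C, ← repC_comp G S C']
        congr 1
        exact Subtype.ext hrep
      subst hCC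
      rfl
  -- Step 3: count the target
  have hcardT : Tgt.card ≤ ∑ x : V, ((rho G x + ddeg G x).choose (i+1) - (rho G x).choose (i+1)) := by
    rw [hTgt, Finset.card_sigma]
    apply Finset.sum_le_sum
    intro x _
    exact count_bound G x i
  omega

end Comps


end LinStrand

open LinStrand in
/-- Let `G` be a finite simple graph with `n` vertices and `e ≥ 1` edges, and let `j, l`
be the integers with `Σ_{t=0}^{j−1}(n−t) < e ≤ Σ_{t=0}^{j}(n−t)` and
`l = e − Σ_{t=0}^{j−1}(n−t)`.  Then for every `i ≥ 0`,
`B_i(G) ≤ Σ_{s=1}^{j} Σ_{u=s}^{n} C(u−1, i) + Σ_{u=j+1}^{j+l} C(u−1, i)`. -/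
theorem linStrand_upper_bound
    {V : Type*} [Fintype V] [DecidableEq V] (G : SimpleGraph V) [DecidableRel G.Adj]
    (n e j l : ℕ) (hn : n = Fintype.card V) (he : e = G.edgeFinset.card) (he1 : 1 ≤ e)
    (hjlt : ∑ t ∈ Finset.range j, (n - t) < e)
    (hjle : e ≤ ∑ t ∈ Finset.range (j + 1), (n - t))
    (hl : l = e - ∑ t ∈ Finset.range j, (n - t)) (i : ℕ) :
    linStrand G i ≤
      (∑ s ∈ Finset.Icc 1 j, ∑ u ∈ Finset.Icc s n, (u - 1).choose i)
        + ∑ u ∈ Finset.Icc (j + 1) (j + l), (u - 1).choose i := by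
  classical
  -- V is nonempty
  have hVne : Nonempty V := by
    have hne : G.edgeFinset.Nonempty := by
      rw [← Finset.card_pos]; omega
    obtain ⟨ed, _⟩ := hne
    exact ⟨ed.out.1⟩
  -- basic abbreviations
  have hPb : ∀ m : ℕ, Pb n m = ∑ t ∈ Finset.range m, (n - t) := fun m => rfl
  have hjlt' : Pb n j < e := hjlt
  have hjle' : e ≤ Pb n (j+1) := hjle
  have hl' : l = e - Pb n j := hl
  clear hjlt hjle hl
  -- the degree sequence
  have hdb : ∀ s, s < n → dseq G s + s + 1 ≤ n := by
    intro s hs; rw [hn] at hs ⊢; exact dseq_bound G s hs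
  have hdg : ∀ s, s < n → 2 * (∑ t ∈ Finset.Ico s n, dseq G t) ≤ (n - s) * dseq G s := by
    intro s hs; rw [hn] at hs ⊢; exact dseq_greedy G s hs
  have hdt : ∑ t ∈ range n, dseq G t = e := by
    rw [hn, he]; exact dseq_total G
  have h2e : 2 * e ≤ n * (n-1) := by
    rw [← hdt]; exact sum_bound _ hdb
  have hQ := Pb_self n
  have hmul : n * (n-1) ≤ n * (n+1) := Nat.mul_le_mul_left n (by omega)
  have heQ : e ≤ Pb n n := by omega
  have hjn : j < n := by
    by_contra hcon
    push_neg at hcon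
    have := Pb_mono n hcon
    omega
  have hl1 : 1 ≤ l := by omega
  have hPbj : Pb n (j+1) = Pb n j + (n - j) := Pb_succ_right n j
  have hln : l ≤ n - j := by omega
  -- the lex capacity sequence
  set c' : ℕ → ℕ := fun s => min (n - s) (e - Pb n s) with hc'def
  have hc'bnd : ∀ s, s < n → s + c' s ≤ n := by
    intro s hs; simp only [hc'def]; omega
  have hc'sum : ∑ s ∈ range n, c' s = e := by
    have h1 : ∑ s ∈ range n, c' s = Rfun e n n := by
      unfold Rfun
      apply Finset.sum_congr rfl
      intro s hs
      simp only [hc'def]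
      omega
    rw [h1, Rfun_total e n n (le_refl n)]
    omega
  -- domination
  have hdom : ∀ v, ∑ s ∈ range n, min (c' s) (v - s) ≤ ∑ s ∈ range n, min (dseq G s) (v - s) := by
    intro v
    have h1 : ∑ s ∈ range n, min (c' s) (v - s) = Rfun e n v := by
      unfold Rfun
      apply Finset.sum_congr rfl
      intro s hs
      simp only [hc'def]
      omega
    rw [h1, ← hdt]
    exact main_induction n (dseq G) hdb hdg v
  -- abel comparison
  have habel : ∑ s ∈ range n, ∑ k ∈ range (dseq G s), (s+k).choose i
      ≤ ∑ s ∈ range n, ∑ k ∈ range (c' s), (s+k).choose i :=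
    abel n i (dseq G) c' (fun s hs => by have := hdb s hs; omega) hc'bnd
      (by rw [hdt, hc'sum]) hdom
  -- Phase I: the graph bound, reindexed
  have hreindex : ∑ x : V, ((rho G x + ddeg G x).choose (i+1) - (rho G x).choose (i+1))
      = ∑ s ∈ range n, ∑ k ∈ range (dseq G s), (s+k).choose i := by
    rw [hn]
    apply Finset.sum_bij' (fun x _ => rho G x) (fun s _ => xv G s)
    · intro x _
      rw [Finset.mem_range]
      exact rho_lt G x
    · intro s hs
      exact Finset.mem_univ _
    · intro x _
      exact xv_rho G x
    · intro s hs
      rw [Finset.mem_range] at hs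
      exact rho_xv G hs
    · intro x _
      rw [ddeg_eq G x, pascal i (dseq G (rho G x)) (rho G x)]
      omega
  have hphase1 : linStrand G i ≤ ∑ s ∈ range n, ∑ k ∈ range (dseq G s), (s+k).choose i := by
    rw [← hreindex]
    exact linStrand_le_vertexsum G i
  -- identify the RHS
  have hrhs : ∑ s ∈ range n, ∑ k ∈ range (c' s), (s+k).choose i
      = (∑ s ∈ Finset.Icc 1 j, ∑ u ∈ Finset.Icc s n, (u - 1).choose i)
        + ∑ u ∈ Finset.Icc (j + 1) (j + l), (u - 1).choose i := by
    -- c' values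
    have hclt : ∀ s, s < j → c' s = n - s := by
      intro s hs
      have h1 : Pb n (s+1) ≤ Pb n j := Pb_mono n (by omega)
      have h2 : Pb n (s+1) = Pb n s + (n - s) := Pb_succ_right n s
      simp only [hc'def]
      omega
    have hcj : c' j = l := by
      simp only [hc'def]
      omega
    have hcgt : ∀ s, j < s → c' s = 0 := by
      intro s hs
      have h1 : Pb n (j+1) ≤ Pb n s := Pb_mono n (by omega)
      simp only [hc'def]
      omega
    -- split the sum
    have hsplit : range n = range (j+1) ∪ Finset.Ico (j+1) n := by
      rw [Finset.range_eq_Ico, Finset.range_eq_Ico]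
      exact (Finset.Ico_union_Ico_eq_Ico (a := 0) (b := j+1) (c := n) (by omega) (by omega)).symm
    have hzero : ∑ s ∈ Finset.Ico (j+1) n, ∑ k ∈ range (c' s), (s+k).choose i = 0 := by
      apply Finset.sum_eq_zero
      intro s hs
      rw [Finset.mem_Ico] at hs
      rw [hcgt s (by omega)]
      simp
    have hdisj : Disjoint (range (j+1)) (Finset.Ico (j+1) n) := by
      rw [Finset.range_eq_Ico]
      exact Finset.Ico_disjoint_Ico_consecutive 0 (j+1) n
    have hinner : ∀ s, s < j → (∑ u ∈ Finset.Icc (1+s) n, (u-1).choose i)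
        = ∑ k ∈ range (n - s), (s+k).choose i := by
      intro s hs
      rw [← Finset.Ico_add_one_right_eq_Icc, Finset.sum_Ico_eq_sum_range]
      have h1 : n + 1 - (1 + s) = n - s := by omega
      rw [h1]
      apply Finset.sum_congr rfl
      intro k _
      congr 1
      omega
    have hpartial : ∑ u ∈ Finset.Icc (j+1) (j+l), (u-1).choose i
        = ∑ k ∈ range l, (j+k).choose i := by
      rw [← Finset.Ico_add_one_right_eq_Icc, Finset.sum_Ico_eq_sum_range]
      have h1 : j + l + 1 - (j+1) = l := by omega
      rw [h1]
      apply Finset.sum_congr rfl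
      intro k _
      congr 1
      omega
    rw [hsplit, Finset.sum_union hdisj, hzero, Nat.add_zero, Finset.sum_range_succ, hcj]
    congr 1
    · rw [show Finset.Icc 1 j = Finset.Ico 1 (j+1) from (Finset.Ico_add_one_right_eq_Icc 1 j).symm,
        Finset.sum_Ico_eq_sum_range]
      simp only [Nat.add_sub_cancel]
      apply Finset.sum_congr rfl
      intro s hs
      rw [Finset.mem_range] at hs
      rw [hclt s hs, hinner s hs]
    · rw [hpartial]
  calc linStrand G i ≤ _ := hphase1
    _ ≤ _ := habel
    _ = _ := hrhs
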